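/- Let S, I, R, B : [0,∞) → ℝ be a solution of the SIRB system S' = −βSI, I' = βSI − γI + βσαIR, R' = γI − βσIR, B' = βσ(1−α)IR with β>0, γ>0, σ>0, 0<α<1, initial conditions S(0)>0, I(0)>0, R(0)≥0, B(0)≥0, S(0)+I(0)+R(0)+B(0)=1, and suppose S(t)>0 and I(t)>0 for all t≥0. If the basic reproduction number ℛ₀ := (β/γ)(S(0) + ασR(0)) satisfies ℛ₀ > 1, then there exists t_p > 0 such that I is monotonically increasing on (0, t_p) and monotonically decreasing on (t_p, ∞), and I(t) → 0 as t → ∞. -/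

import Mathlib

open Set Real MeasureTheory intervalIntegral

set_option maxHeartbeats 1000000

private lemma sirb_f_deriv (a b c d K : ℝ) (x : ℝ) :
    HasDerivAt (fun x => a * Real.exp (-(b*x)) + c * Real.exp (-(d*x)) - K)
      (-(b * (a * Real.exp (-(b*x)))) + -(d * (c * Real.exp (-(d*x))))) x := by
  have h1 : HasDerivAt (fun x : ℝ => -(b*x)) (-b) x := by
    simpa using (hasDerivAt_id x).const_mul (-b)
  have h2 : HasDerivAt (fun x : ℝ => -(d*x)) (-d) x := by
    simpa using (hasDerivAt_id x).const_mul (-d)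
  have := ((h1.exp.const_mul a).add (h2.exp.const_mul c)).sub_const K
  refine this.congr_deriv ?_
  ring

private lemma sirb_neg_mul_tendsto (b : ℝ) (hb : 0 < b) :
    Filter.Tendsto (fun x : ℝ => -(b*x)) Filter.atTop Filter.atBot := by
  apply Filter.tendsto_atTop_atBot.mpr
  intro r
  refine ⟨-r/b, fun x hx => ?_⟩
  rw [div_le_iff₀ hb] at hx
  nlinarith

private lemma sirb_f_tendsto (a b c d K : ℝ) (hb : 0 < b) (hd : 0 < d) :
    Filter.Tendsto (fun x => a * Real.exp (-(b*x)) + c * Real.exp (-(d*x)) - K)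
      Filter.atTop (nhds (-K)) := by
  have := (((Real.tendsto_exp_atBot.comp (sirb_neg_mul_tendsto b hb)).const_mul a).add
    ((Real.tendsto_exp_atBot.comp (sirb_neg_mul_tendsto d hd)).const_mul c)).sub_const K
  simpa using this

private lemma sirb_key_sign (a b c d K : ℝ) (ha : 0 < a) (hb : 0 < b) (hd : 0 < d)
    (hK : 0 < K) (h0 : 0 < a + c - K) :
    ∃ xs : ℝ, 0 < xs ∧
      (∀ x, 0 ≤ x → x < xs → 0 < a * Real.exp (-(b*x)) + c * Real.exp (-(d*x)) - K) ∧
      (∀ x, xs < x → a * Real.exp (-(b*x)) + c * Real.exp (-(d*x)) - K < 0) := by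
  set f : ℝ → ℝ := fun x => a * Real.exp (-(b*x)) + c * Real.exp (-(d*x)) - K with hf
  have hderiv : ∀ x, HasDerivAt f (-(b * (a * Real.exp (-(b*x)))) + -(d * (c * Real.exp (-(d*x))))) x :=
    fun x => sirb_f_deriv a b c d K x
  have hderiv' : ∀ x, deriv f x = -(b * (a * Real.exp (-(b*x)))) + -(d * (c * Real.exp (-(d*x)))) :=
    fun x => (hderiv x).deriv
  have hdiff : Differentiable ℝ f := fun x => (hderiv x).differentiableAt
  have hcont : Continuous f :=
    ((continuous_const.mul (((continuous_const.mul continuous_id).neg).rexp)).add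
      (continuous_const.mul (((continuous_const.mul continuous_id).neg).rexp))).sub continuous_const
  have hf0 : 0 < f 0 := by simp [hf]; linarith
  have hlim : Filter.Tendsto f Filter.atTop (nhds (-K)) :=
    sirb_f_tendsto a b c d K hb hd
  -- pattern A: monotone up to m, strictly decreasing after
  have patternA : ∀ m : ℝ, 0 ≤ m → MonotoneOn f (Icc 0 m) → StrictAntiOn f (Ici m) →
      ∃ xs : ℝ, 0 < xs ∧ (∀ x, 0 ≤ x → x < xs → 0 < f x) ∧ (∀ x, xs < x → f x < 0) := by
    intro m hm hmono hanti
    have hfm : 0 < f m := lt_of_lt_of_le hf0 (hmono ⟨le_refl 0, hm⟩ ⟨hm, le_refl m⟩ hm)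
    obtain ⟨X, hXm, hXneg⟩ : ∃ X, m < X ∧ f X < 0 := by
      have hev : ∀ᶠ x in Filter.atTop, f x < 0 := hlim.eventually_lt_const (by linarith)
      obtain ⟨X0, hX0⟩ := hev.exists_forall_of_atTop
      exact ⟨max X0 (m+1), lt_of_lt_of_le (by linarith) (le_max_right _ _), hX0 _ (le_max_left _ _)⟩
    obtain ⟨xs, hxs, hfxs⟩ : ∃ xs ∈ Ioo m X, f xs = 0 := by
      have h00 : (0:ℝ) ∈ Ioo (f X) (f m) := ⟨hXneg, hfm⟩
      exact intermediate_value_Ioo' (le_of_lt hXm) hcont.continuousOn h00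
    refine ⟨xs, lt_of_le_of_lt hm hxs.1, ?_, ?_⟩
    · intro x hx hxlt
      rcases le_or_gt x m with h | h
      · exact lt_of_lt_of_le hf0 (hmono ⟨le_refl 0, hm⟩ ⟨hx, h⟩ hx)
      · have := hanti (le_of_lt h) (le_of_lt hxs.1) hxlt
        rw [hfxs] at this; exact this
    · intro x hxgt
      have := hanti (le_of_lt hxs.1) (le_of_lt (lt_trans hxs.1 hxgt)) hxgt
      rw [hfxs] at this; exact this
  -- pattern B: strictly decreasing up to m, below -K after
  have patternB : ∀ m : ℝ, 0 < m → StrictAntiOn f (Icc 0 m) → (∀ x, m ≤ x → f x ≤ -K) →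
      ∃ xs : ℝ, 0 < xs ∧ (∀ x, 0 ≤ x → x < xs → 0 < f x) ∧ (∀ x, xs < x → f x < 0) := by
    intro m hm hanti hbelow
    have hfm : f m < 0 := lt_of_le_of_lt (hbelow m (le_refl m)) (by linarith)
    obtain ⟨xs, hxs, hfxs⟩ : ∃ xs ∈ Ioo 0 m, f xs = 0 := by
      have h00 : (0:ℝ) ∈ Ioo (f m) (f 0) := ⟨hfm, hf0⟩
      exact intermediate_value_Ioo' (le_of_lt hm) hcont.continuousOn h00
    refine ⟨xs, hxs.1, ?_, ?_⟩
    · intro x hx hxlt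
      have := hanti ⟨hx, le_of_lt (lt_trans hxlt hxs.2)⟩ ⟨le_of_lt hxs.1, le_of_lt hxs.2⟩ hxlt
      rw [hfxs] at this; exact this
    · intro x hxgt
      rcases le_or_gt x m with h | h
      · have := hanti ⟨le_of_lt hxs.1, le_of_lt hxs.2⟩
          ⟨le_trans (le_of_lt hxs.1) (le_of_lt hxgt), h⟩ hxgt
        rw [hfxs] at this; exact this
      · exact lt_of_le_of_lt (hbelow x (le_of_lt h)) (by linarith)
  rcases le_or_gt 0 c with hc | hc
  · -- c ≥ 0: f strictly decreasing on [0,∞)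
    refine patternA 0 (le_refl 0)
      (fun x hx y hy _ => by
        have : x = 0 := le_antisymm hx.2 hx.1
        have : y = 0 := le_antisymm hy.2 hy.1
        simp_all) ?_
    apply strictAntiOn_of_deriv_neg (convex_Ici 0) hcont.continuousOn
    intro x _
    rw [hderiv' x]
    nlinarith [mul_pos hb (mul_pos ha (Real.exp_pos (-(b*x)))),
      mul_nonneg (mul_nonneg hd.le hc) (Real.exp_pos (-(d*x))).le]
  · rcases lt_trichotomy b d with hbd | hbd | hbd
    · -- c < 0, b < d : increasing then decreasing
      have hr : 0 < d * (-c) / (a * b) := div_pos (mul_pos hd (by linarith)) (mul_pos ha hb)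
      set q := Real.log (d * (-c) / (a * b)) / (d - b) with hq
      have hfact : ∀ x : ℝ, deriv f x
          = Real.exp (-(d*x)) * (d * (-c) - a * b * Real.exp ((d-b)*x)) := by
        intro x
        have key : Real.exp (-(b*x)) = Real.exp (-(d*x)) * Real.exp ((d-b)*x) := by
          rw [← Real.exp_add]; congr 1; ring
        rw [hderiv' x, key]; ring
      have hneg : ∀ x, q < x → deriv f x < 0 := by
        intro x hx
        rw [hfact]
        have h1 : Real.log (d * (-c) / (a * b)) < (d-b)*x := by
          rw [hq, div_lt_iff₀ (by linarith)] at hx; nlinarith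
        have h2 : d * (-c) / (a * b) < Real.exp ((d-b)*x) := by
          rw [← Real.exp_log hr]; exact Real.exp_lt_exp.mpr h1
        rw [div_lt_iff₀ (by positivity)] at h2
        have := Real.exp_pos (-(d*x))
        nlinarith
      have hpos : ∀ x, x < q → 0 ≤ deriv f x := by
        intro x hx
        rw [hfact]
        have h1 : (d-b)*x < Real.log (d * (-c) / (a * b)) := by
          rw [hq, lt_div_iff₀ (by linarith)] at hx; nlinarith
        have h2 : Real.exp ((d-b)*x) < d * (-c) / (a * b) := by
          rw [← Real.exp_log hr]; exact Real.exp_lt_exp.mpr h1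
        rw [lt_div_iff₀ (by positivity)] at h2
        have := Real.exp_pos (-(d*x))
        nlinarith
      refine patternA (max 0 q) (le_max_left _ _) ?_ ?_
      · apply monotoneOn_of_deriv_nonneg (convex_Icc _ _) hcont.continuousOn
          (hdiff.differentiableOn)
        intro x hx
        rw [interior_Icc] at hx
        have hmq : max 0 q = q := by
          rcases le_or_gt q 0 with h | h
          · exfalso
            have := lt_trans hx.1 hx.2
            rw [max_eq_left h] at this
            exact lt_irrefl 0 this
          · exact max_eq_right h.le
        exact hpos x (by rw [← hmq]; exact hx.2)
      · apply strictAntiOn_of_deriv_neg (convex_Ici _) hcont.continuousOn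
        intro x hx
        rw [interior_Ici] at hx
        exact hneg x (lt_of_le_of_lt (le_max_right _ _) hx)
    · -- c < 0, b = d : f = (a+c)exp(-bx) - K, strictly decreasing
      refine patternA 0 (le_refl 0)
        (fun x hx y hy _ => by
          have : x = 0 := le_antisymm hx.2 hx.1
          have : y = 0 := le_antisymm hy.2 hy.1
          simp_all) ?_
      apply strictAntiOn_of_deriv_neg (convex_Ici 0) hcont.continuousOn
      intro x _
      rw [hderiv' x, ← hbd]
      have e1 : 0 < Real.exp (-(b*x)) := Real.exp_pos _
      nlinarith [mul_pos (mul_pos hb e1) (show (0:ℝ) < a + c by linarith)]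
    · -- c < 0, d < b : decreasing then increasing toward -K
      have hr : 0 < a * b / (d * (-c)) := div_pos (mul_pos ha hb) (mul_pos hd (by linarith))
      set q := Real.log (a * b / (d * (-c))) / (b - d) with hq
      have hfact : ∀ x : ℝ, deriv f x
          = Real.exp (-(b*x)) * (d * (-c) * Real.exp ((b-d)*x) - a * b) := by
        intro x
        have key : Real.exp (-(d*x)) = Real.exp (-(b*x)) * Real.exp ((b-d)*x) := by
          rw [← Real.exp_add]; congr 1; ring
        rw [hderiv' x, key]; ring
      have hposd : ∀ x, q < x → 0 < deriv f x := by
        intro x hx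
        rw [hfact]
        have h1 : Real.log (a * b / (d * (-c))) < (b-d)*x := by
          rw [hq, div_lt_iff₀ (by linarith)] at hx; nlinarith
        have h2 : a * b / (d * (-c)) < Real.exp ((b-d)*x) := by
          rw [← Real.exp_log hr]; exact Real.exp_lt_exp.mpr h1
        rw [div_lt_iff₀ (mul_pos hd (by linarith : (0:ℝ) < -c))] at h2
        have := Real.exp_pos (-(b*x))
        nlinarith
      have hnegd : ∀ x, x < q → deriv f x < 0 := by
        intro x hx
        rw [hfact]
        have h1 : (b-d)*x < Real.log (a * b / (d * (-c))) := by
          rw [hq, lt_div_iff₀ (by linarith)] at hx; nlinarith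
        have h2 : Real.exp ((b-d)*x) < a * b / (d * (-c)) := by
          rw [← Real.exp_log hr]; exact Real.exp_lt_exp.mpr h1
        rw [lt_div_iff₀ (mul_pos hd (by linarith : (0:ℝ) < -c))] at h2
        have := Real.exp_pos (-(b*x))
        nlinarith
      set m := max 0 q with hm
      have hmonoafter : MonotoneOn f (Ici m) := by
        apply monotoneOn_of_deriv_nonneg (convex_Ici _) hcont.continuousOn
          (hdiff.differentiableOn)
        intro x hx
        rw [interior_Ici] at hx
        exact le_of_lt (hposd x (lt_of_le_of_lt (le_max_right _ _) hx))
      have hbelow : ∀ x, m ≤ x → f x ≤ -K := by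
        intro x hx
        refine ge_of_tendsto hlim ?_
        filter_upwards [Filter.eventually_ge_atTop x] with y hy
        exact hmonoafter hx (le_trans hx hy) hy
      have hm0 : 0 < m := by
        rcases lt_or_ge 0 m with h | h
        · exact h
        · exfalso
          have hm0' : m = 0 := le_antisymm h (le_max_left _ _)
          have := hbelow 0 (by rw [hm0'])
          linarith
      refine patternB m hm0 ?_ hbelow
      apply strictAntiOn_of_deriv_neg (convex_Icc _ _) hcont.continuousOn
      intro x hx
      rw [interior_Icc] at hx
      apply hnegd
      have hmq : m = q := by
        rcases le_or_gt q 0 with h | h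
        · exfalso; rw [hm, max_eq_left h] at hm0; exact lt_irrefl 0 hm0
        · rw [hm, max_eq_right h.le]
      rw [← hmq]; exact hx.2


/-- If `ℛ₀ = (β/γ)(S(0) + ασR(0)) > 1` then there is `t_p > 0` such that
`I` is monotonically increasing on `(0,t_p)`, monotonically decreasing on `(t_p,∞)`,
and `I(t) → 0` as `t → ∞`. -/
theorem sirb_one_peak_of_R0_gt_one (β γ σ α : ℝ) (S I R B : ℝ → ℝ)
    (hβ : 0 < β) (hγ : 0 < γ) (hσ : 0 < σ) (hα0 : 0 < α) (hα1 : α < 1)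
    (hS' : ∀ t : ℝ, 0 ≤ t → HasDerivAt S (-(β * S t * I t)) t)
    (hI' : ∀ t : ℝ, 0 ≤ t → HasDerivAt I (β * S t * I t - γ * I t + β * σ * α * I t * R t) t)
    (hR' : ∀ t : ℝ, 0 ≤ t → HasDerivAt R (γ * I t - β * σ * I t * R t) t)
    (hB' : ∀ t : ℝ, 0 ≤ t → HasDerivAt B (β * σ * (1 - α) * I t * R t) t)
    (hS0 : 0 < S 0) (hI0 : 0 < I 0) (hR0 : 0 ≤ R 0) (hB0 : 0 ≤ B 0)
    (hsum : S 0 + I 0 + R 0 + B 0 = 1)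
    (hSpos : ∀ t : ℝ, 0 ≤ t → 0 < S t) (hIpos : ∀ t : ℝ, 0 ≤ t → 0 < I t)
    (hR0gt : 1 < β / γ * (S 0 + α * σ * R 0)) :
    ∃ tp : ℝ, 0 < tp ∧ StrictMonoOn I (Set.Ioo 0 tp) ∧ StrictAntiOn I (Set.Ioi tp) ∧
      Filter.Tendsto I Filter.atTop (nhds 0) := by
  have hIcont : ContinuousOn I (Ici 0) := fun t ht => (hI' t ht).continuousAt.continuousWithinAt
  have hInt : ∀ s t : ℝ, 0 ≤ s → 0 ≤ t → IntervalIntegrable I volume s t := by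
    intro s t hs ht
    apply (hIcont.mono _).intervalIntegrable
    intro x hx
    rcases le_total s t with h | h
    · rw [uIcc_of_le h] at hx; exact le_trans hs hx.1
    · rw [uIcc_of_ge h] at hx; exact le_trans ht hx.1
  set u : ℝ → ℝ := fun t => ∫ s in (0:ℝ)..t, I s with hu_def
  have hu0 : u 0 = 0 := by simp [hu_def]
  have huD : ∀ t, 0 ≤ t → HasDerivWithinAt u (I t) (Ici t) t := by
    intro t ht
    apply intervalIntegral.integral_hasDerivWithinAt_right (hInt 0 t le_rfl ht)
      (t := Ioi t)
    · exact ⟨Ioi t, self_mem_nhdsWithin,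
        (hIcont.mono (fun x hx => le_trans ht (le_of_lt hx))).aestronglyMeasurable
          measurableSet_Ioi⟩
    · exact ((hI' t ht).continuousAt).continuousWithinAt
  have hucont : ContinuousOn u (Ici 0) := by
    intro t ht
    rcases eq_or_lt_of_le (show (0:ℝ) ≤ t from ht) with h | h
    · exact h ▸ (huD 0 le_rfl).continuousWithinAt
    · have : HasDerivAt u (I t) t := by
        have hIc : ContinuousAt I t := (hI' t ht).continuousAt
        have := intervalIntegral.integral_hasDerivAt_right (hInt 0 t le_rfl ht)
          ⟨Ioi 0, Ioi_mem_nhds h,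
            (hIcont.mono (fun x hx => le_of_lt hx)).aestronglyMeasurable measurableSet_Ioi⟩
          hIc
        exact this
      exact this.continuousAt.continuousWithinAt
  have huadd : ∀ s t : ℝ, 0 ≤ s → 0 ≤ t → u t - u s = ∫ x in s..t, I x := by
    intro s t hs ht
    have := intervalIntegral.integral_add_adjacent_intervals (hInt 0 s le_rfl hs) (hInt s t hs ht)
    simp only [hu_def]
    rw [← this]; ring
  have humono : StrictMonoOn u (Ici 0) := by
    intro s hs t ht hst
    have hpos : 0 < ∫ x in s..t, I x :=
      intervalIntegral.intervalIntegral_pos_of_pos_on (hInt s t hs ht)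
        (fun x hx => hIpos x (le_trans hs (le_of_lt hx.1))) hst
    have := huadd s t hs ht
    linarith
  have hu0' : ∀ t, 0 ≤ t → 0 ≤ u t := by
    intro t ht
    rcases eq_or_lt_of_le ht with h | h
    · rw [← h, hu0]
    · rw [← hu0]; exact le_of_lt (humono (mem_Ici.mpr (le_refl (0:ℝ))) ht h)
  -- closed form for S
  have hSeq : ∀ t, 0 ≤ t → S t = S 0 * Real.exp (-(β * u t)) := by
    intro T hT
    rcases eq_or_lt_of_le hT with h | h
    · rw [← h, hu0]; simp
    · have key : ∀ x ∈ Icc 0 T, S x * Real.exp (β * u x) = S 0 * Real.exp (β * u 0) := by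
        apply constant_of_has_deriv_right_zero
        · exact ContinuousOn.mul (fun x hx => (hS' x hx.1).continuousAt.continuousWithinAt)
            (((hucont.mono (Icc_subset_Ici_self)).const_smul β).rexp)
        · intro x hx
          have hx0 : 0 ≤ x := hx.1
          have hd1 : HasDerivWithinAt S (-(β * S x * I x)) (Ici x) x :=
            (hS' x hx0).hasDerivWithinAt
          have hd2 : HasDerivWithinAt (fun y => Real.exp (β * u y))
              (Real.exp (β * u x) * (β * I x)) (Ici x) x :=
            (((huD x hx0).const_mul β).exp)
          have := hd1.mul hd2
          refine this.congr_deriv ?_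
          ring
      have h1 := key T ⟨hT, le_rfl⟩
      rw [hu0] at h1
      simp only [mul_zero, Real.exp_zero, mul_one] at h1
      have he : Real.exp (β * u T) ≠ 0 := (Real.exp_pos _).ne'
      rw [Real.exp_neg]
      field_simp
      linarith [h1]
  -- closed form for R
  set Rst : ℝ := γ / (β * σ) with hRst_def
  have hReq : ∀ t, 0 ≤ t → R t = Rst + (R 0 - Rst) * Real.exp (-(β * σ * u t)) := by
    intro T hT
    rcases eq_or_lt_of_le hT with h | h
    · rw [← h, hu0]; simp
    · have key : ∀ x ∈ Icc 0 T, (R x - Rst) * Real.exp (β * σ * u x)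
          = (R 0 - Rst) * Real.exp (β * σ * u 0) := by
        apply constant_of_has_deriv_right_zero
        · exact ContinuousOn.mul
            (ContinuousOn.sub (fun x hx => (hR' x hx.1).continuousAt.continuousWithinAt)
              continuousOn_const)
            (((hucont.mono (Icc_subset_Ici_self)).const_smul (β*σ)).rexp)
        · intro x hx
          have hx0 : 0 ≤ x := hx.1
          have hd1 : HasDerivWithinAt (fun y => R y - Rst) (γ * I x - β * σ * I x * R x) (Ici x) x :=
            ((hR' x hx0).sub_const Rst).hasDerivWithinAt
          have hd2 : HasDerivWithinAt (fun y => Real.exp (β * σ * u y))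
              (Real.exp (β * σ * u x) * (β * σ * I x)) (Ici x) x :=
            (((huD x hx0).const_mul (β*σ)).exp)
          have := hd1.mul hd2
          refine this.congr_deriv ?_
          have hgi : γ * I x = β * σ * I x * Rst := by
            rw [hRst_def]; field_simp
          rw [hgi]
          ring
      have h1 := key T ⟨hT, le_rfl⟩
      rw [hu0] at h1
      simp only [mul_zero, Real.exp_zero, mul_one] at h1
      have he : Real.exp (β * σ * u T) ≠ 0 := (Real.exp_pos _).ne'
      rw [Real.exp_neg]
      have h2 : R T - Rst = (R 0 - Rst) * (Real.exp (β * σ * u T))⁻¹ := by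
        field_simp
        linarith [h1]
      linarith [h2]
  -- the function f
  set a : ℝ := β * S 0 with ha_def
  set c : ℝ := α * (β * σ * R 0 - γ) with hc_def
  set K : ℝ := (1 - α) * γ with hK_def
  have hK : 0 < K := by rw [hK_def]; nlinarith
  have hLf : ∀ t, 0 ≤ t →
      β * S t + α * β * σ * R t - γ
        = a * Real.exp (-(β * u t)) + c * Real.exp (-(β * σ * u t)) - K := by
    intro t ht
    rw [hSeq t ht, hReq t ht, ha_def, hc_def, hK_def, hRst_def]
    have hβσ : β * σ ≠ 0 := (mul_pos hβ hσ).ne'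
    field_simp
    ring
  have h0 : 0 < a + c - K := by
    have h1 : γ < β * (S 0 + α * σ * R 0) := by
      rw [div_mul_eq_mul_div, one_lt_div hγ] at hR0gt
      linarith [hR0gt]
    rw [ha_def, hc_def, hK_def]
    nlinarith
  obtain ⟨xs, hxs0, hfpos, hfneg⟩ :=
    sirb_key_sign a β c (β * σ) K (by rw [ha_def]; positivity) hβ (mul_pos hβ hσ) hK h0
  -- derivative of I
  have hIder : ∀ t, 0 ≤ t → deriv I t
      = I t * (a * Real.exp (-(β * u t)) + c * Real.exp (-(β * σ * u t)) - K) := by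
    intro t ht
    rw [(hI' t ht).deriv, ← hLf t ht]
    ring
  -- existence of a time where u exceeds xs
  have hexist : ∃ T, 0 < T ∧ xs < u T := by
    by_contra hcon
    push_neg at hcon
    have hult : ∀ t, 0 < t → u t < xs := by
      intro t ht
      rcases lt_or_eq_of_le (hcon t ht) with h | h
      · exact h
      · exfalso
        have := humono (le_of_lt ht) (le_of_lt (by linarith : (0:ℝ) < t + 1)) (by linarith)
        have h2 := hcon (t+1) (by linarith)
        rw [h] at this
        linarith
    have hImono : StrictMonoOn I (Ici 0) := by
      apply strictMonoOn_of_deriv_pos (convex_Ici 0) hIcont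
      intro x hx
      rw [interior_Ici] at hx
      rw [hIder x (le_of_lt hx)]
      have := hfpos (u x) (hu0' x (le_of_lt hx)) (hult x hx)
      exact mul_pos (hIpos x (le_of_lt hx)) this
    have hIlow : ∀ t, 1 ≤ t → I 1 ≤ I t := by
      intro t ht
      rcases eq_or_lt_of_le ht with h | h
      · rw [← h]
      · exact le_of_lt
          (hImono (by norm_num : (1:ℝ) ∈ Ici 0) (by simp; linarith : t ∈ Ici 0) h)
    have hub : ∀ t, 1 ≤ t → u 1 + I 1 * (t - 1) ≤ u t := by
      intro t ht
      have h1 : (0:ℝ) ≤ 1 := by norm_num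
      have h2 : 0 ≤ t := by linarith
      have hint : ∫ x in (1:ℝ)..t, I 1 ≤ ∫ x in (1:ℝ)..t, I x := by
        apply intervalIntegral.integral_mono_on ht intervalIntegrable_const (hInt 1 t h1 h2)
        intro x hx
        exact hIlow x hx.1
      rw [intervalIntegral.integral_const, smul_eq_mul] at hint
      have := huadd 1 t h1 h2
      linarith
    set T : ℝ := 1 + (xs - u 1)/(I 1) + 1 with hT_def
    have hI1 : 0 < I 1 := hIpos 1 (by norm_num)
    have hT1 : 1 ≤ T := by
      rw [hT_def]
      have : 0 ≤ (xs - u 1)/(I 1) ∨ (xs - u 1)/(I 1) < 0 := le_or_gt _ _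
      rcases this with h | h
      · linarith
      · -- xs < u 1, contradiction with hult
        exfalso
        have := hult 1 (by norm_num)
        rw [div_neg_iff] at h
        rcases h with ⟨h1, h2⟩ | ⟨h1, h2⟩
        · linarith
        · linarith
    have := hub T hT1
    have hxsT : xs < u T := by
      have h3 : I 1 * (T - 1) = I 1 * ((xs - u 1)/(I 1)) + I 1 := by
        rw [hT_def]; ring
      rw [mul_div_cancel₀ _ hI1.ne'] at h3
      nlinarith
    exact absurd hxsT (not_lt.mpr (hcon T (by linarith)))
  obtain ⟨T, hT0, hTxs⟩ := hexist
  obtain ⟨tp, htp_mem, htp⟩ : ∃ tp ∈ Ioo (0:ℝ) T, u tp = xs := by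
    have hmem : xs ∈ Ioo (u 0) (u T) := by
      rw [hu0]; exact ⟨hxs0, hTxs⟩
    exact intermediate_value_Ioo (le_of_lt hT0)
      (hucont.mono (fun x hx => hx.1)) hmem
  have htp0 : 0 < tp := htp_mem.1
  -- strict monotonicity on (0, tp)
  have hmonoI : StrictMonoOn I (Ioo 0 tp) := by
    have : StrictMonoOn I (Icc 0 tp) := by
      apply strictMonoOn_of_deriv_pos (convex_Icc 0 tp)
        (hIcont.mono (fun x hx => hx.1))
      intro x hx
      rw [interior_Icc] at hx
      rw [hIder x (le_of_lt hx.1)]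
      have hux : u x < xs := by
        rw [← htp]
        exact humono (le_of_lt hx.1) (le_of_lt htp0) hx.2
      exact mul_pos (hIpos x (le_of_lt hx.1)) (hfpos (u x) (hu0' x (le_of_lt hx.1)) hux)
    exact this.mono (fun x hx => ⟨le_of_lt hx.1, le_of_lt hx.2⟩)
  -- strict antitonicity on [tp, ∞)
  have hantiIci : StrictAntiOn I (Ici tp) := by
    apply strictAntiOn_of_deriv_neg (convex_Ici tp)
      (hIcont.mono (fun x hx => le_trans (le_of_lt htp0) hx))
    intro x hx
    rw [interior_Ici] at hx
    have hx0 : (0:ℝ) ≤ x := le_of_lt (lt_trans htp0 hx)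
    rw [hIder x hx0]
    have hux : xs < u x := by
      rw [← htp]
      exact humono (le_of_lt htp0) hx0 hx
    have hneg := hfneg (u x) hux
    have := hIpos x hx0
    nlinarith
  have hantiI : StrictAntiOn I (Ioi tp) := hantiIci.mono (fun x hx => mem_Ici.mpr (le_of_lt hx))
  -- convergence of I to a limit
  set J : ℝ → ℝ := fun t => I (max t 0 + tp) with hJ_def
  have hJanti : Antitone J := by
    intro s t hst
    have h1 : tp ≤ max s 0 + tp := by
      have := le_max_right s 0; linarith
    have h2 : tp ≤ max t 0 + tp := by
      have := le_max_right t 0; linarith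
    exact hantiIci.antitoneOn h1 h2 (by have := max_le_max hst (le_refl (0:ℝ)); linarith)
  have hJbdd : BddBelow (Set.range J) := by
    refine ⟨0, fun y hy => ?_⟩
    obtain ⟨t, rfl⟩ := hy
    have : tp ≤ max t 0 + tp := by have := le_max_right t 0; linarith
    exact le_of_lt (hIpos _ (le_trans (le_of_lt htp0) this))
  set l : ℝ := ⨅ t, J t with hl_def
  have hJlim : Filter.Tendsto J Filter.atTop (nhds l) := tendsto_atTop_ciInf hJanti hJbdd
  have hIJ : ∀ t, tp ≤ t → I t = J (t - tp) := by
    intro t ht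
    rw [hJ_def]
    simp only []
    rw [max_eq_left (by linarith : (0:ℝ) ≤ t - tp)]
    ring_nf
  have hIlim : Filter.Tendsto I Filter.atTop (nhds l) := by
    have hcomp : Filter.Tendsto (fun t : ℝ => J (t - tp)) Filter.atTop (nhds l) :=
      hJlim.comp (Filter.tendsto_atTop_add_const_right _ (-tp) Filter.tendsto_id)
    apply hcomp.congr'
    filter_upwards [Filter.eventually_ge_atTop tp] with t ht
    exact (hIJ t ht).symm
  have hl0 : 0 ≤ l := by
    rw [hl_def]
    apply le_ciInf
    intro t
    have : tp ≤ max t 0 + tp := by have := le_max_right t 0; linarith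
    exact le_of_lt (hIpos _ (le_trans (le_of_lt htp0) this))
  -- show l = 0
  have hlzero : l = 0 := by
    by_contra hlne
    have hl : 0 < l := lt_of_le_of_ne hl0 (Ne.symm hlne)
    have hIge : ∀ t, tp ≤ t → l ≤ I t := by
      intro t ht
      rw [hIJ t ht, hl_def]
      exact ciInf_le hJbdd (t - tp)
    have hu_lb : ∀ t, tp ≤ t → u tp + l * (t - tp) ≤ u t := by
      intro t ht
      have htp0' : (0:ℝ) ≤ tp := le_of_lt htp0
      have ht0 : (0:ℝ) ≤ t := le_trans htp0' ht
      have hint : ∫ x in tp..t, l ≤ ∫ x in tp..t, I x := by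
        apply intervalIntegral.integral_mono_on ht intervalIntegrable_const (hInt tp t htp0' ht0)
        intro x hx
        exact hIge x hx.1
      rw [intervalIntegral.integral_const, smul_eq_mul] at hint
      have := huadd tp t htp0' ht0
      linarith
    -- eventually f(u t) < -K/2
    have hflim := sirb_f_tendsto a β c (β*σ) K hβ (mul_pos hβ hσ)
    have hev : ∀ᶠ x in Filter.atTop,
        a * Real.exp (-(β*x)) + c * Real.exp (-(β*σ*x)) - K < -K/2 :=
      hflim.eventually_lt_const (by linarith)
    obtain ⟨X2, hX2⟩ := hev.exists_forall_of_atTop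
    set T2 : ℝ := tp + max 0 ((X2 - u tp)/l) with hT2_def
    have hT2tp : tp ≤ T2 := by
      rw [hT2_def]; have := le_max_left (0:ℝ) ((X2 - u tp)/l); linarith
    have huT2 : ∀ t, T2 ≤ t → X2 ≤ u t := by
      intro t ht
      have htp_t : tp ≤ t := le_trans hT2tp ht
      have h1 := hu_lb t htp_t
      have h2 : (X2 - u tp)/l ≤ max 0 ((X2 - u tp)/l) := le_max_right _ _
      have h3 : (X2 - u tp)/l ≤ t - tp := by
        rw [hT2_def] at ht; linarith
      have h4 : X2 - u tp ≤ l * (t - tp) := by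
        rw [div_le_iff₀ hl] at h3; linarith [h3]
      linarith
    have hderneg : ∀ t, T2 ≤ t → deriv I t ≤ -(l * K / 2) := by
      intro t ht
      have htp_t : tp ≤ t := le_trans hT2tp ht
      have ht0 : (0:ℝ) ≤ t := le_trans (le_of_lt htp0) htp_t
      rw [hIder t ht0]
      have hfu := hX2 (u t) (huT2 t ht)
      have hIt := hIge t htp_t
      have hIpos' := hIpos t ht0
      nlinarith
    -- I decreases at rate at least lK/2 after T2, contradiction
    set g : ℝ → ℝ := fun t => I t + (l * K / 2) * t with hg_def
    have hganti : AntitoneOn g (Ici T2) := by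
      apply antitoneOn_of_deriv_nonpos (convex_Ici T2)
      · apply ContinuousOn.add
        · exact hIcont.mono (fun x hx => le_trans (le_trans (le_of_lt htp0) hT2tp) hx)
        · exact (continuous_const.mul continuous_id).continuousOn
      · rw [interior_Ici]
        intro y hy
        have hy0 : (0:ℝ) ≤ y := le_trans (le_trans (le_of_lt htp0) hT2tp) (le_of_lt hy)
        have h2 : HasDerivAt (fun t : ℝ => (l * K / 2) * t) (l * K / 2) y := by
          simpa using (hasDerivAt_id y).const_mul (l * K / 2)
        exact (((hI' y hy0).add h2).differentiableAt).differentiableWithinAt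
      · intro x hx
        rw [interior_Ici] at hx
        have hx0 : (0:ℝ) ≤ x := le_trans (le_trans (le_of_lt htp0) hT2tp) (le_of_lt hx)
        have hD : HasDerivAt g (deriv I x + l * K / 2) x := by
          have h1 : HasDerivAt I (deriv I x) x := by
            rw [hIder x hx0, ← hLf x hx0]
            have := hI' x hx0
            convert this using 1
            ring
          have h2 : HasDerivAt (fun t : ℝ => (l * K / 2) * t) (l * K / 2) x := by
            simpa using (hasDerivAt_id x).const_mul (l * K / 2)
          exact h1.add h2
        rw [hD.deriv]
        have := hderneg x (le_of_lt hx)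
        linarith
    exfalso
    set tbad : ℝ := T2 + (I T2 * 2 / (l * K)) + 1 with htbad_def
    have hlK : 0 < l * K := mul_pos hl hK
    have htbad : T2 ≤ tbad := by
      rw [htbad_def]
      have hIT2 : 0 < I T2 := hIpos T2 (le_trans (le_trans (le_of_lt htp0) hT2tp) (le_refl T2))
      have : 0 ≤ I T2 * 2 / (l * K) := by positivity
      linarith
    have := hganti (le_refl T2 : T2 ∈ Ici T2) (htbad : tbad ∈ Ici T2) htbad
    rw [hg_def] at this
    simp only [] at this
    have hIbad : 0 < I tbad :=
      hIpos tbad (le_trans (le_trans (le_of_lt htp0) hT2tp) htbad)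
    have hexp : I T2 * 2 / (l * K) * (l * K / 2) = I T2 := by
      field_simp
    nlinarith [this]
  rw [hlzero] at hIlim
  exact ⟨tp, htp0, hmonoI, hantiI, hIlim⟩
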